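/- arXiv:2108.09015 — 2 statements merged into one kernel-verified Lean document; each statement's English description precedes it below -/
import Mathlib

section
/- Let ξ ~ Bin(q, 1/2), and let d, q be positive integers with q/d ≥ q^{1/3} (i.e., d ≤ q^{2/3}). Then Pr(q/d divides ξ) ≤ 2q^{-2} + (1/sqrt(q)) · ⌈(2 sqrt(q ln q) + 1) / (q/d)⌉, which is O(q^{-1/3} sqrt(ln q)) as q → ∞. -/
open Finset Filter

/-- The probability that a Binomial(q, 1/2) random variable equals k. -/
noncomputable def binomHalfProb (q k : ℕ) : ℝ :=
  (Nat.choose q k : ℝ) * (1 / 2) ^ k * (1 / 2) ^ (q - k)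

/-- The bound `2 q⁻² + q^{-1/2} ⌈(2 √(q ln q) + 1) / (q/d)⌉` from the proof. -/
noncomputable def divisibleProbBound (q d : ℕ) : ℝ :=
  2 / (q : ℝ) ^ 2 +
    (1 / Real.sqrt q) * (⌈(2 * Real.sqrt (q * Real.log q) + 1) / ((q / d : ℕ) : ℝ)⌉ : ℝ)

lemma binomHalfProb_nonneg (q k : ℕ) : 0 ≤ binomHalfProb q k := by
  unfold binomHalfProb; positivity

lemma cb_sqrt_le (n : ℕ) : (Nat.centralBinom n : ℝ) * Real.sqrt (2 * n + 1) ≤ 4 ^ n := by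
  induction n with
  | zero => simp [Nat.centralBinom]
  | succ n ih =>
    have key : ((n : ℝ) + 1) * (Nat.centralBinom (n + 1) : ℝ)
        = 2 * (2 * n + 1) * (Nat.centralBinom n : ℝ) := by
      exact_mod_cast congrArg (fun x : ℕ => (x : ℝ)) (Nat.succ_mul_centralBinom_succ n)
    have ha0 : (0 : ℝ) ≤ (Nat.centralBinom n : ℝ) := Nat.cast_nonneg _
    have hs2 : Real.sqrt (2 * (n : ℝ) + 1) ^ 2 = 2 * n + 1 := Real.sq_sqrt (by positivity)
    have hu2 : Real.sqrt (2 * (n : ℝ) + 3) ^ 2 = 2 * n + 3 := Real.sq_sqrt (by positivity)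
    have hsu : (2 * (n : ℝ) + 1) * Real.sqrt (2 * (n : ℝ) + 3)
        ≤ (2 * n + 2) * Real.sqrt (2 * (n : ℝ) + 1) := by
      apply le_of_pow_le_pow_left₀ (n := 2) (by norm_num) (by positivity)
      rw [mul_pow, mul_pow, hs2, hu2]
      nlinarith [sq_nonneg ((n : ℝ))]
    have hcast : (2 : ℝ) * ((n : ℕ) + 1 : ℕ) + 1 = 2 * (n : ℝ) + 3 := by push_cast; ring
    rw [hcast]
    have h1 : ((n : ℝ) + 1) * ((Nat.centralBinom (n + 1) : ℝ) * Real.sqrt (2 * (n : ℝ) + 3))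
        ≤ ((n : ℝ) + 1) * 4 ^ (n + 1) := by
      calc ((n : ℝ) + 1) * ((Nat.centralBinom (n + 1) : ℝ) * Real.sqrt (2 * (n : ℝ) + 3))
          = (2 * (Nat.centralBinom n : ℝ)) * ((2 * (n : ℝ) + 1) * Real.sqrt (2 * (n : ℝ) + 3)) := by
            rw [show ((n : ℝ) + 1) * ((Nat.centralBinom (n + 1) : ℝ) * Real.sqrt (2 * (n : ℝ) + 3))
              = (((n : ℝ) + 1) * (Nat.centralBinom (n + 1) : ℝ)) * Real.sqrt (2 * (n : ℝ) + 3) by ring, key]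
            ring
        _ ≤ (2 * (Nat.centralBinom n : ℝ)) * ((2 * (n : ℝ) + 2) * Real.sqrt (2 * (n : ℝ) + 1)) :=
            mul_le_mul_of_nonneg_left hsu (by positivity)
        _ = (4 * (n : ℝ) + 4) * ((Nat.centralBinom n : ℝ) * Real.sqrt (2 * (n : ℝ) + 1)) := by ring
        _ ≤ (4 * (n : ℝ) + 4) * 4 ^ n := mul_le_mul_of_nonneg_left ih (by positivity)
        _ = ((n : ℝ) + 1) * 4 ^ (n + 1) := by ring
    exact le_of_mul_le_mul_left h1 (by positivity)

lemma choose_half_sqrt_le (q : ℕ) : ((q.choose (q / 2) : ℝ)) * Real.sqrt q ≤ 2 ^ q := by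
  rcases Nat.even_or_odd q with ⟨n, hn⟩ | ⟨n, hn⟩
  · subst hn
    have h2n : n + n = 2 * n := by ring
    rw [h2n]
    have hhalf : 2 * n / 2 = n := by omega
    rw [hhalf]
    have : ((2 * n).choose n : ℝ) = (Nat.centralBinom n : ℝ) := by rw [Nat.centralBinom]
    rw [this]
    have hle : Real.sqrt ((2 * n : ℕ) : ℝ) ≤ Real.sqrt (2 * (n : ℝ) + 1) := by
      apply Real.sqrt_le_sqrt; push_cast; linarith
    calc (Nat.centralBinom n : ℝ) * Real.sqrt ((2 * n : ℕ) : ℝ)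
        ≤ (Nat.centralBinom n : ℝ) * Real.sqrt (2 * (n : ℝ) + 1) :=
          mul_le_mul_of_nonneg_left hle (Nat.cast_nonneg _)
      _ ≤ 4 ^ n := cb_sqrt_le n
      _ = 2 ^ (2 * n) := by rw [pow_mul]; norm_num
  · subst hn
    have hhalf : (2 * n + 1) / 2 = n := by omega
    rw [hhalf]
    have hdouble : (Nat.centralBinom (n + 1) : ℝ) = 2 * ((2 * n + 1).choose n : ℝ) := by
      have : Nat.centralBinom (n + 1) = (2 * n + 1).choose n + (2 * n + 1).choose (n + 1) := by
        rw [Nat.centralBinom, show 2 * (n + 1) = (2 * n + 1) + 1 by ring]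
        rw [Nat.choose_succ_succ]
      rw [this, Nat.choose_symm_half]
      push_cast; ring
    have hcb := cb_sqrt_le (n + 1)
    have hle : Real.sqrt ((2 * n + 1 : ℕ) : ℝ) ≤ Real.sqrt (2 * ((n : ℝ) + 1) + 1) := by
      apply Real.sqrt_le_sqrt; push_cast; linarith
    have h1 : 2 * (((2 * n + 1).choose n : ℝ) * Real.sqrt ((2 * n + 1 : ℕ) : ℝ)) ≤ 4 ^ (n + 1) := by
      calc 2 * (((2 * n + 1).choose n : ℝ) * Real.sqrt ((2 * n + 1 : ℕ) : ℝ))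
          = (Nat.centralBinom (n + 1) : ℝ) * Real.sqrt ((2 * n + 1 : ℕ) : ℝ) := by
            rw [hdouble]; ring
        _ ≤ (Nat.centralBinom (n + 1) : ℝ) * Real.sqrt (2 * ((n : ℝ) + 1) + 1) :=
            mul_le_mul_of_nonneg_left hle (Nat.cast_nonneg _)
        _ ≤ 4 ^ (n + 1) := by
            have := cb_sqrt_le (n + 1)
            calc (Nat.centralBinom (n + 1) : ℝ) * Real.sqrt (2 * ((n : ℝ) + 1) + 1)
                = (Nat.centralBinom (n + 1) : ℝ) * Real.sqrt (2 * ((n + 1 : ℕ) : ℝ) + 1) := by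
                  push_cast; ring_nf
              _ ≤ 4 ^ (n + 1) := cb_sqrt_le (n + 1)
    have h4 : (4 : ℝ) ^ (n + 1) = 2 * 2 ^ (2 * n + 1) := by
      rw [show (4:ℝ) = 2^2 by norm_num, ← pow_mul]
      rw [show 2 * (n + 1) = (2 * n + 1) + 1 by ring, pow_succ]
      ring
    rw [h4] at h1; linarith

lemma prob_le_inv_sqrt (q k : ℕ) (hq : 0 < q) (hk : k ≤ q) :
    binomHalfProb q k ≤ 1 / Real.sqrt q := by
  have hsq : (0 : ℝ) < Real.sqrt q := Real.sqrt_pos.mpr (by exact_mod_cast hq)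
  unfold binomHalfProb
  rw [mul_assoc, ← pow_add, Nat.add_sub_cancel' hk]
  have h1 : (q.choose k : ℝ) ≤ (q.choose (q / 2) : ℝ) := by
    exact_mod_cast Nat.choose_le_middle k q
  have h2 := choose_half_sqrt_le q
  have hp : (0:ℝ) < (1/2 : ℝ) ^ q := by positivity
  rw [le_div_iff₀ hsq]
  calc (q.choose k : ℝ) * (1/2) ^ q * Real.sqrt q
      ≤ (q.choose (q / 2) : ℝ) * (1/2) ^ q * Real.sqrt q := by
        apply mul_le_mul_of_nonneg_right (mul_le_mul_of_nonneg_right h1 hp.le) hsq.le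
    _ = ((q.choose (q / 2) : ℝ) * Real.sqrt q) * (1/2) ^ q := by ring
    _ ≤ 2 ^ q * (1/2) ^ q := mul_le_mul_of_nonneg_right h2 hp.le
    _ = 1 := by rw [← mul_pow]; norm_num

lemma mgf_eq (q : ℕ) (s : ℝ) :
    ∑ k ∈ Finset.range (q + 1), binomHalfProb q k * Real.exp (s * ((k : ℝ) - q / 2))
      = Real.cosh (s / 2) ^ q := by
  have h1 : ∀ k ∈ Finset.range (q + 1),
      binomHalfProb q k * Real.exp (s * ((k : ℝ) - q / 2))
        = (Real.exp s / 2) ^ k * (1 / 2) ^ (q - k) * (q.choose k : ℝ)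
            * Real.exp (-(s * q) / 2) := by
    intro k _
    unfold binomHalfProb
    rw [show s * ((k : ℝ) - q / 2) = (k : ℝ) * s + -(s * q) / 2 by ring, Real.exp_add,
      Real.exp_nat_mul]
    ring
  rw [Finset.sum_congr rfl h1, ← Finset.sum_mul, ← add_pow]
  rw [show -(s * (q : ℝ)) / 2 = (q : ℝ) * (-(s / 2)) by ring, Real.exp_nat_mul, ← mul_pow]
  congr 1
  have e1 : Real.exp s = Real.exp (s / 2) * Real.exp (s / 2) := by
    rw [← Real.exp_add]; norm_num
  have he : Real.exp (s / 2) ≠ 0 := (Real.exp_pos _).ne'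
  rw [Real.cosh_eq, e1, Real.exp_neg]
  field_simp

lemma tail_le (q : ℕ) (s c : ℝ) (P : ℕ → Prop) [DecidablePred P]
    (h : ∀ k ∈ Finset.range (q + 1), P k → c ≤ s * ((k : ℝ) - q / 2)) :
    ∑ k ∈ (Finset.range (q + 1)).filter P, binomHalfProb q k
      ≤ Real.exp (-c) * Real.cosh (s / 2) ^ q := by
  have step1 : ∑ k ∈ (Finset.range (q + 1)).filter P, binomHalfProb q k
      ≤ ∑ k ∈ (Finset.range (q + 1)).filter P,
          binomHalfProb q k * Real.exp (s * ((k : ℝ) - q / 2)) * Real.exp (-c) := by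
    apply Finset.sum_le_sum
    intro k hk
    obtain ⟨hk1, hk2⟩ := Finset.mem_filter.mp hk
    have h2 : Real.exp c ≤ Real.exp (s * ((k : ℝ) - q / 2)) :=
      Real.exp_le_exp.mpr (h k hk1 hk2)
    have h3 : 0 ≤ binomHalfProb q k := binomHalfProb_nonneg q k
    calc binomHalfProb q k = binomHalfProb q k * Real.exp c * Real.exp (-c) := by
          rw [mul_assoc, ← Real.exp_add]; simp
      _ ≤ binomHalfProb q k * Real.exp (s * ((k : ℝ) - q / 2)) * Real.exp (-c) := by
          have := mul_le_mul_of_nonneg_left h2 h3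
          exact mul_le_mul_of_nonneg_right this (Real.exp_nonneg _)
  have step2 : ∑ k ∈ (Finset.range (q + 1)).filter P,
        binomHalfProb q k * Real.exp (s * ((k : ℝ) - q / 2)) * Real.exp (-c)
      ≤ ∑ k ∈ Finset.range (q + 1),
          binomHalfProb q k * Real.exp (s * ((k : ℝ) - q / 2)) * Real.exp (-c) := by
    apply Finset.sum_le_sum_of_subset_of_nonneg (Finset.filter_subset _ _)
    intro k _ _
    have := binomHalfProb_nonneg q k
    positivity
  have step3 : ∑ k ∈ Finset.range (q + 1),
        binomHalfProb q k * Real.exp (s * ((k : ℝ) - q / 2)) * Real.exp (-c)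
      = Real.cosh (s / 2) ^ q * Real.exp (-c) := by
    rw [← Finset.sum_mul, mgf_eq]
  rw [mul_comm]
  exact (step1.trans step2).trans_eq step3

lemma tail_num_bound (q : ℕ) (hq : 0 < q) (t : ℝ) (ht2 : t ^ 2 = (q : ℝ) * Real.log q) :
    Real.exp (-(4 * t ^ 2 / q)) * Real.cosh (4 * t / q / 2) ^ q ≤ 1 / (q : ℝ) ^ 2 := by
  have hq0 : (0 : ℝ) < q := by exact_mod_cast hq
  have h1 : Real.cosh (4 * t / q / 2) ≤ Real.exp ((4 * t / q) ^ 2 / 8) := by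
    have h := Real.cosh_le_exp_half_sq (4 * t / q / 2)
    have e : (4 * t / q / 2) ^ 2 / 2 = (4 * t / q) ^ 2 / 8 := by ring
    rwa [e] at h
  have h2 : Real.cosh (4 * t / q / 2) ^ q ≤ Real.exp ((4 * t / q) ^ 2 / 8) ^ q :=
    pow_le_pow_left₀ (Real.cosh_pos _).le h1 q
  have h3 : Real.exp ((4 * t / q) ^ 2 / 8) ^ q = Real.exp ((q : ℝ) * ((4 * t / q) ^ 2 / 8)) :=
    (Real.exp_nat_mul _ q).symm
  have h4 : -(4 * t ^ 2 / (q : ℝ)) + (q : ℝ) * ((4 * t / q) ^ 2 / 8) = -(2 * Real.log q) := by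
    have e : -(4 * t ^ 2 / (q : ℝ)) + (q : ℝ) * ((4 * t / q) ^ 2 / 8) = -(2 * t ^ 2 / q) := by
      field_simp; ring
    rw [e, ht2]; field_simp
  have h5 : Real.exp (-(2 * Real.log q)) = 1 / (q : ℝ) ^ 2 := by
    rw [show -(2 * Real.log q) = -(Real.log q + Real.log q) by ring, Real.exp_neg, Real.exp_add,
      Real.exp_log hq0, one_div, sq]
  calc Real.exp (-(4 * t ^ 2 / q)) * Real.cosh (4 * t / q / 2) ^ q
      ≤ Real.exp (-(4 * t ^ 2 / q)) * Real.exp ((q : ℝ) * ((4 * t / q) ^ 2 / 8)) := by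
        rw [← h3]; exact mul_le_mul_of_nonneg_left h2 (Real.exp_nonneg _)
    _ = Real.exp (-(4 * t ^ 2 / q) + (q : ℝ) * ((4 * t / q) ^ 2 / 8)) := (Real.exp_add _ _).symm
    _ = 1 / (q : ℝ) ^ 2 := by rw [h4, h5]

lemma part1 (q d : ℕ) (hq : 0 < q) (hd : 0 < d) (hdq : d ∣ q)
    (hpow : ((q : ℝ)) ^ ((1 : ℝ) / 3) ≤ ((q / d : ℕ) : ℝ)) :
    ∑ k ∈ Finset.range (q + 1), (if (q / d) ∣ k then binomHalfProb q k else 0)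
      ≤ divisibleProbBound q d := by
  classical
  have hq0 : (0 : ℝ) < q := by exact_mod_cast hq
  have hq1 : (1 : ℝ) ≤ q := by exact_mod_cast hq
  set m := q / d with hmdef
  have hm1 : (1 : ℝ) ≤ (m : ℝ) := le_trans (Real.one_le_rpow hq1 (by norm_num)) hpow
  have hm0 : 0 < m := by exact_mod_cast lt_of_lt_of_le zero_lt_one hm1
  set t := Real.sqrt ((q : ℝ) * Real.log q) with htdef
  have hlog0 : 0 ≤ Real.log q := Real.log_nonneg hq1
  have ht0 : 0 ≤ t := Real.sqrt_nonneg _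
  have ht2 : t ^ 2 = (q : ℝ) * Real.log q := Real.sq_sqrt (mul_nonneg hq0.le hlog0)
  rw [show (∑ k ∈ Finset.range (q + 1), (if m ∣ k then binomHalfProb q k else 0))
      = ∑ k ∈ (Finset.range (q + 1)).filter (fun k => m ∣ k), binomHalfProb q k
      from (Finset.sum_filter _ _).symm]
  set D := (Finset.range (q + 1)).filter (fun k => m ∣ k) with hD
  have hsplit := Finset.sum_filter_add_sum_filter_not D (fun k : ℕ => |(k : ℝ) - q / 2| ≤ t)
      (binomHalfProb q)
  set B := D.filter (fun k : ℕ => |(k : ℝ) - q / 2| ≤ t) with hBdef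
  set F := D.filter (fun k : ℕ => ¬ |(k : ℝ) - q / 2| ≤ t) with hFdef
  -- near part
  have hDsub : D ⊆ Finset.range (q + 1) := by rw [hD]; exact Finset.filter_subset _ _
  have hBsub : B ⊆ Finset.range (q + 1) := by
    refine Finset.Subset.trans ?_ hDsub
    rw [hBdef]; exact Finset.filter_subset _ _
  have hnear : ∑ k ∈ B, binomHalfProb q k ≤ (B.card : ℝ) * (1 / Real.sqrt q) := by
    have h := Finset.sum_le_card_nsmul B (binomHalfProb q) (1 / Real.sqrt q)
      (fun k hk => prob_le_inv_sqrt q k hq (Nat.lt_succ_iff.mp (Finset.mem_range.mp (hBsub hk))))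
    rwa [nsmul_eq_mul] at h
  have hmem : ∀ k ∈ B, m ∣ k ∧ |(k : ℝ) - q / 2| ≤ t := by
    intro k hk
    have h2 := Finset.mem_filter.mp hk
    exact ⟨(Finset.mem_filter.mp h2.1).2, h2.2⟩
  have hm0' : (0 : ℝ) < (m : ℝ) := by linarith
  have hcard : (B.card : ℝ) ≤ ((⌈(2 * t + 1) / (m : ℝ)⌉ : ℤ) : ℝ) := by
    have hxpos : (0 : ℝ) < (2 * t + 1) / (m : ℝ) := by positivity
    rcases B.eq_empty_or_nonempty with hBe | hBe
    · rw [hBe]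
      simp only [Finset.card_empty, Nat.cast_zero]
      exact_mod_cast Int.ceil_nonneg hxpos.le
    · set k0 := B.min' hBe with hk0def
      set k1 := B.max' hBe with hk1def
      have hk0B := B.min'_mem hBe
      have hk1B := B.max'_mem hBe
      obtain ⟨a, ha⟩ := (hmem k0 hk0B).1
      obtain ⟨b, hb⟩ := (hmem k1 hk1B).1
      have hk01 : k0 ≤ k1 := B.min'_le k1 hk1B
      have hab : a ≤ b := by
        by_contra hc
        push_neg at hc
        have : k1 < k0 := by
          rw [ha, hb]
          exact (Nat.mul_lt_mul_left hm0).mpr hc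
        omega
      have hinj : Set.InjOn (fun k => k / m) B := by
        intro x hx y hy hxy
        obtain ⟨u, hu⟩ := (hmem x hx).1
        obtain ⟨v, hv⟩ := (hmem y hy).1
        simp only at hxy
        rw [hu, hv, Nat.mul_div_cancel_left _ hm0, Nat.mul_div_cancel_left _ hm0] at hxy
        rw [hu, hv, hxy]
      have himg : B.image (fun k => k / m) ⊆ Finset.Icc a b := by
        intro j hj
        obtain ⟨x, hx, rfl⟩ := Finset.mem_image.mp hj
        have h1 : k0 ≤ x := B.min'_le x hx
        have h2 : x ≤ k1 := B.le_max' x hx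
        rw [Finset.mem_Icc]
        constructor
        · have h3 : k0 / m ≤ x / m := Nat.div_le_div_right h1
          rwa [ha, Nat.mul_div_cancel_left _ hm0] at h3
        · have h3 : x / m ≤ k1 / m := Nat.div_le_div_right h2
          rwa [hb, Nat.mul_div_cancel_left _ hm0] at h3
      have hcard1 : B.card ≤ b - a + 1 := by
        calc B.card = (B.image (fun k => k / m)).card := (Finset.card_image_of_injOn hinj).symm
          _ ≤ (Finset.Icc a b).card := Finset.card_le_card himg
          _ = b + 1 - a := Nat.card_Icc a b
          _ ≤ b - a + 1 := by omega
      have habs0 := abs_le.mp (hmem k0 hk0B).2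
      have habs1 := abs_le.mp (hmem k1 hk1B).2
      have e0 : (k0 : ℝ) = (m : ℝ) * a := by exact_mod_cast congrArg (fun x : ℕ => (x : ℝ)) ha
      have e1 : (k1 : ℝ) = (m : ℝ) * b := by exact_mod_cast congrArg (fun x : ℕ => (x : ℝ)) hb
      have hba : ((b : ℝ) - a) * m ≤ 2 * t := by
        have e2 : ((b : ℝ) - a) * m = (k1 : ℝ) - k0 := by rw [e0, e1]; ring
        rw [e2]; linarith [habs0.1, habs1.2]
      have hcR : (B.card : ℝ) ≤ (b : ℝ) - a + 1 := by
        have h4 : (B.card : ℕ) + a ≤ b + 1 := by omega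
        have h5 := (Nat.cast_le (α := ℝ)).mpr h4
        push_cast at h5
        linarith
      have hlt : ((B.card : ℝ) - 1) < (2 * t + 1) / (m : ℝ) := by
        rw [lt_div_iff₀ hm0']
        have h6 : ((B.card : ℝ) - 1) * m ≤ ((b : ℝ) - a) * m :=
          mul_le_mul_of_nonneg_right (by linarith) (by linarith)
        linarith
      have hile : (B.card : ℤ) ≤ ⌈(2 * t + 1) / (m : ℝ)⌉ := by
        have h7 : ((B.card : ℤ) - 1 : ℤ) < ⌈(2 * t + 1) / (m : ℝ)⌉ := by
          apply Int.lt_ceil.mpr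
          push_cast
          linarith
        omega
      exact_mod_cast hile
  -- far part
  have hFsub : F ⊆ (Finset.range (q + 1)).filter (fun k : ℕ => ¬ |(k : ℝ) - q / 2| ≤ t) :=
    Finset.monotone_filter_left _ (Finset.filter_subset _ _)
  have hfar1 : ∑ k ∈ F, binomHalfProb q k
      ≤ ∑ k ∈ (Finset.range (q + 1)).filter (fun k : ℕ => ¬ |(k : ℝ) - q / 2| ≤ t),
          binomHalfProb q k :=
    Finset.sum_le_sum_of_subset_of_nonneg hFsub (fun k _ _ => binomHalfProb_nonneg q k)
  have hunion : (Finset.range (q + 1)).filter (fun k : ℕ => ¬ |(k : ℝ) - q / 2| ≤ t)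
      = (Finset.range (q + 1)).filter (fun k : ℕ => (q : ℝ) / 2 + t < k)
        ∪ (Finset.range (q + 1)).filter (fun k : ℕ => (k : ℝ) < q / 2 - t) := by
    rw [← Finset.filter_or]
    apply Finset.filter_congr
    intro k _
    rw [not_le, lt_abs]
    constructor
    · rintro (h | h)
      · left; linarith
      · right; linarith
    · rintro (h | h)
      · left; linarith
      · right; linarith
  have hdisj : Disjoint ((Finset.range (q + 1)).filter (fun k : ℕ => (q : ℝ) / 2 + t < k))
      ((Finset.range (q + 1)).filter (fun k : ℕ => (k : ℝ) < q / 2 - t)) := by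
    rw [Finset.disjoint_left]
    intro k h1 h2
    have h1' := (Finset.mem_filter.mp h1).2
    have h2' := (Finset.mem_filter.mp h2).2
    linarith
  have hupper : ∑ k ∈ (Finset.range (q + 1)).filter (fun k : ℕ => (q : ℝ) / 2 + t < k),
      binomHalfProb q k ≤ 1 / (q : ℝ) ^ 2 := by
    have h := tail_le q (4 * t / q) (4 * t ^ 2 / q) (fun k : ℕ => (q : ℝ) / 2 + t < k) ?_
    · exact h.trans (tail_num_bound q hq t ht2)
    · intro k _ hk
      have hs : (0 : ℝ) ≤ 4 * t / q := by positivity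
      calc 4 * t ^ 2 / (q : ℝ) = (4 * t / q) * t := by ring
        _ ≤ (4 * t / q) * ((k : ℝ) - q / 2) := mul_le_mul_of_nonneg_left (by linarith) hs
  have hlower : ∑ k ∈ (Finset.range (q + 1)).filter (fun k : ℕ => (k : ℝ) < q / 2 - t),
      binomHalfProb q k ≤ 1 / (q : ℝ) ^ 2 := by
    have h := tail_le q (-(4 * t / q)) (4 * t ^ 2 / q) (fun k : ℕ => (k : ℝ) < q / 2 - t) ?_
    · have e : Real.cosh (-(4 * t / (q : ℝ)) / 2) = Real.cosh (4 * t / (q : ℝ) / 2) := by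
        rw [show -(4 * t / (q : ℝ)) / 2 = -(4 * t / (q : ℝ) / 2) by ring, Real.cosh_neg]
      rw [e] at h
      exact h.trans (tail_num_bound q hq t ht2)
    · intro k _ hk
      have hs : (0 : ℝ) ≤ 4 * t / q := by positivity
      calc 4 * t ^ 2 / (q : ℝ) = (4 * t / q) * t := by ring
        _ ≤ (4 * t / q) * ((q : ℝ) / 2 - k) := mul_le_mul_of_nonneg_left (by linarith) hs
        _ = -(4 * t / q) * ((k : ℝ) - q / 2) := by ring
  have hfar : ∑ k ∈ F, binomHalfProb q k ≤ 2 / (q : ℝ) ^ 2 := by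
    rw [hunion] at hfar1
    rw [Finset.sum_union hdisj] at hfar1
    have := hupper
    have := hlower
    rw [show (2 : ℝ) / (q : ℝ) ^ 2 = 1 / (q : ℝ) ^ 2 + 1 / (q : ℝ) ^ 2 by ring]
    linarith
  -- conclude
  unfold divisibleProbBound
  rw [← hmdef, ← htdef]
  have hsq0 : (0 : ℝ) ≤ 1 / Real.sqrt q := by positivity
  have hfinal : (B.card : ℝ) * (1 / Real.sqrt q)
      ≤ (1 / Real.sqrt q) * ((⌈(2 * t + 1) / (m : ℝ)⌉ : ℤ) : ℝ) := by
    rw [mul_comm]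
    exact mul_le_mul_of_nonneg_left hcard hsq0
  rw [← hsplit]
  have e3 : (2 * t + 1) / (m : ℝ) = (2 * t + 1) / (m : ℝ) := rfl
  linarith [hnear, hfar, hfinal]

set_option maxHeartbeats 2000000 in
lemma part2 (d : ℕ → ℕ) (hd : ∀ q, 0 < q → 0 < d q ∧ d q ∣ q ∧
      ((q : ℝ)) ^ ((1 : ℝ) / 3) ≤ ((q / d q : ℕ) : ℝ)) :
    (fun q : ℕ => divisibleProbBound q (d q)) =O[atTop]
      (fun q : ℕ => ((q : ℝ)) ^ (-(1 / 3 : ℝ)) * Real.sqrt (Real.log q)) := by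
  rw [Asymptotics.isBigO_iff]
  refine ⟨6, ?_⟩
  filter_upwards [eventually_ge_atTop 3] with q hq3
  have hq : 0 < q := by omega
  obtain ⟨-, -, hpow⟩ := hd q hq
  have hq0 : (0 : ℝ) < q := by exact_mod_cast hq
  have hq1 : (1 : ℝ) ≤ q := by exact_mod_cast hq
  have hq3' : (3 : ℝ) ≤ q := by exact_mod_cast hq3
  set m := q / d q with hmdef
  have hr3pos : (0 : ℝ) < (q : ℝ) ^ ((1 : ℝ) / 3) := Real.rpow_pos_of_pos hq0 _
  have hm1 : (1 : ℝ) ≤ (m : ℝ) := le_trans (Real.one_le_rpow hq1 (by norm_num)) hpow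
  have hm0 : (0 : ℝ) < (m : ℝ) := by linarith
  have hlog1 : 1 ≤ Real.log q := by
    have h3 : Real.exp 1 ≤ 3 := by
      have := Real.exp_one_lt_d9
      linarith
    calc (1 : ℝ) = Real.log (Real.exp 1) := (Real.log_exp 1).symm
      _ ≤ Real.log q := Real.log_le_log (Real.exp_pos 1) (by linarith)
  have hlog0 : (0 : ℝ) ≤ Real.log q := by linarith
  have hL1 : 1 ≤ Real.sqrt (Real.log q) := by
    rw [show (1 : ℝ) = Real.sqrt 1 by simp]
    exact Real.sqrt_le_sqrt hlog1
  have hL0 : (0 : ℝ) ≤ Real.sqrt (Real.log q) := by linarith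
  set g := ((q : ℝ)) ^ (-(1 / 3 : ℝ)) * Real.sqrt (Real.log q) with hgdef
  have hrneg : ((q : ℝ)) ^ (-(1 / 3 : ℝ)) = ((q : ℝ) ^ ((1 : ℝ) / 3))⁻¹ := by
    rw [← Real.rpow_neg hq0.le]
  have hg0 : 0 ≤ g := by
    rw [hgdef]
    have := Real.rpow_nonneg hq0.le (-(1 / 3 : ℝ))
    positivity
  set x := (2 * Real.sqrt ((q : ℝ) * Real.log q) + 1) / (m : ℝ) with hxdef
  have hx0 : (0 : ℝ) < x := by positivity
  have hb0 : 0 ≤ divisibleProbBound q (d q) := by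
    unfold divisibleProbBound
    rw [← hmdef, ← hxdef]
    have h1 : (0 : ℝ) ≤ ((⌈x⌉ : ℤ) : ℝ) := by exact_mod_cast Int.ceil_nonneg hx0.le
    have h2 : (0 : ℝ) ≤ 1 / Real.sqrt q := by positivity
    have h3 : (0 : ℝ) ≤ 2 / (q : ℝ) ^ 2 := by positivity
    positivity
  rw [Real.norm_eq_abs, Real.norm_eq_abs, abs_of_nonneg hg0, abs_of_nonneg hb0]
  unfold divisibleProbBound
  rw [← hmdef, ← hxdef]
  have hsqq : Real.sqrt (q : ℝ) = (q : ℝ) ^ ((1 : ℝ) / 2) := Real.sqrt_eq_rpow _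
  have hsqpos : (0 : ℝ) < Real.sqrt q := Real.sqrt_pos.mpr hq0
  have hceil : ((⌈x⌉ : ℤ) : ℝ) ≤ x + 1 := (Int.ceil_lt_add_one x).le
  have hsplitsqrt : Real.sqrt ((q : ℝ) * Real.log q)
      = Real.sqrt q * Real.sqrt (Real.log q) := Real.sqrt_mul hq0.le _
  -- piece 1 : 2 / q^2 ≤ 2 * g
  have hA : (q : ℝ) ^ ((1 : ℝ) / 3) ≤ (q : ℝ) ^ 2 := by
    rw [show ((q : ℝ) ^ 2) = (q : ℝ) ^ ((2 : ℕ) : ℝ) from (Real.rpow_natCast _ 2).symm]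
    exact Real.rpow_le_rpow_of_exponent_le hq1 (by norm_num)
  have hp1 : 2 / (q : ℝ) ^ 2 ≤ 2 * g := by
    have h1 : 2 / (q : ℝ) ^ 2 ≤ 2 / (q : ℝ) ^ ((1 : ℝ) / 3) :=
      div_le_div_of_nonneg_left (by norm_num) hr3pos hA
    have h2 : 2 / (q : ℝ) ^ ((1 : ℝ) / 3) = 2 * ((q : ℝ)) ^ (-(1 / 3 : ℝ)) := by
      rw [hrneg, div_eq_mul_inv]
    have h3 : 2 * ((q : ℝ)) ^ (-(1 / 3 : ℝ)) ≤ 2 * g := by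
      rw [hgdef]
      nlinarith [Real.rpow_nonneg hq0.le (-(1 / 3 : ℝ))]
    linarith
  -- piece 2 : 1 / sqrt q ≤ g
  have hp2 : 1 / Real.sqrt q ≤ g := by
    have h1 : (q : ℝ) ^ (-(1 / 2 : ℝ)) ≤ (q : ℝ) ^ (-(1 / 3 : ℝ)) :=
      Real.rpow_le_rpow_of_exponent_le hq1 (by norm_num)
    have h2 : 1 / Real.sqrt q = (q : ℝ) ^ (-(1 / 2 : ℝ)) := by
      rw [hsqq, one_div, ← Real.rpow_neg hq0.le]
    have h3 : ((q : ℝ)) ^ (-(1 / 3 : ℝ)) ≤ g := by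
      rw [hgdef]
      nlinarith [Real.rpow_nonneg hq0.le (-(1 / 3 : ℝ))]
    linarith
  -- piece 3 : (1 / sqrt q) * x ≤ 3 * g
  have hp3 : (1 / Real.sqrt q) * x ≤ 3 * g := by
    have e1 : (1 / Real.sqrt q) * x
        = 2 * Real.sqrt (Real.log q) / (m : ℝ) + 1 / (Real.sqrt q * m) := by
      rw [hxdef, hsplitsqrt]
      field_simp
    have h1 : 2 * Real.sqrt (Real.log q) / (m : ℝ)
        ≤ 2 * Real.sqrt (Real.log q) / (q : ℝ) ^ ((1 : ℝ) / 3) :=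
      div_le_div_of_nonneg_left (by positivity) hr3pos hpow
    have h2 : 2 * Real.sqrt (Real.log q) / (q : ℝ) ^ ((1 : ℝ) / 3) = 2 * g := by
      rw [hgdef, hrneg, div_eq_mul_inv]
      ring
    have h3 : 1 / (Real.sqrt q * (m : ℝ)) ≤ 1 / Real.sqrt q := by
      have hle : Real.sqrt q ≤ Real.sqrt q * (m : ℝ) := by nlinarith [hsqpos, hm1]
      exact one_div_le_one_div_of_le hsqpos hle
    linarith [hp2]
  -- combine
  have hfin : 2 / (q : ℝ) ^ 2 + (1 / Real.sqrt q) * ((⌈x⌉ : ℤ) : ℝ) ≤ 6 * g := by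
    have h1 : (1 / Real.sqrt q) * ((⌈x⌉ : ℤ) : ℝ) ≤ (1 / Real.sqrt q) * (x + 1) :=
      mul_le_mul_of_nonneg_left hceil (by positivity)
    have h2 : (1 / Real.sqrt q) * (x + 1) = (1 / Real.sqrt q) * x + 1 / Real.sqrt q := by ring
    linarith [hp1, hp2, hp3]
  linarith [hfin]

theorem binomial_divisible_by_large_prob :
    (∀ q d : ℕ, 0 < q → 0 < d → d ∣ q → ((q : ℝ)) ^ ((1 : ℝ) / 3) ≤ ((q / d : ℕ) : ℝ) →
      ∑ k ∈ Finset.range (q + 1), (if (q / d) ∣ k then binomHalfProb q k else 0)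
        ≤ divisibleProbBound q d) ∧
    (∀ d : ℕ → ℕ, (∀ q, 0 < q → 0 < d q ∧ d q ∣ q ∧
        ((q : ℝ)) ^ ((1 : ℝ) / 3) ≤ ((q / d q : ℕ) : ℝ)) →
      (fun q : ℕ => divisibleProbBound q (d q)) =O[atTop]
        (fun q : ℕ => ((q : ℝ)) ^ (-(1 / 3 : ℝ)) * Real.sqrt (Real.log q))) := by
  exact ⟨fun q d hq hd hdq hpow => part1 q d hq hd hdq hpow, fun d hd => part2 d hd⟩
end

section
/- Let q ≥ r ≥ 1, q > r, and let I₁, I₂ be sets with |I₁| = q, |I₂| = r, |I₁ ∩ I₂| = k. Suppose a row of a random binary matrix (i.i.d. Bernoulli(1/2) entries) is 'bad' for (I₁, I₂), meaning the fraction of ones among the columns in I₁ equals the fraction among the columns in I₂. If q - k ≥ 1, then the probability the row is bad is at most max_l C(q-k, l)/2^{q-k} ≤ 1/2. -/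
open Finset
open scoped Classical

/-- A row `x` is bad for the pair of coalitions `(I₁, I₂)` if the fraction of ones among
the columns in `I₁` equals the fraction of ones among the columns in `I₂`. -/
def BadRow {M : ℕ} (I₁ I₂ : Finset (Fin M)) (x : Fin M → Bool) : Prop :=
  ((I₁.filter (fun i => x i = true)).card : ℝ) / I₁.card =
    ((I₂.filter (fun i => x i = true)).card : ℝ) / I₂.card

lemma choose_le_two_pow_pred : ∀ n : ℕ, 1 ≤ n → ∀ l, Nat.choose n l ≤ 2 ^ (n - 1) := by
  intro n
  induction n with
  | zero => omega
  | succ m ih =>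
    intro _ l
    rcases Nat.eq_zero_or_pos m with hm | hm
    · subst hm
      rcases l with _ | _ | l <;> simp [Nat.choose]
    · rcases l with _ | l
      · simpa using Nat.one_le_two_pow
      · rw [Nat.choose_succ_succ]
        have h1 := ih hm l
        have h2 := ih hm (l + 1)
        have : 2 ^ (m - 1) + 2 ^ (m - 1) = 2 ^ m := by
          rw [← two_mul, ← pow_succ']
          congr 1
          omega
        calc m.choose l + m.choose (l + 1) ≤ 2 ^ (m - 1) + 2 ^ (m - 1) := by
              exact Nat.add_le_add h1 h2
          _ = 2 ^ m := this
          _ = 2 ^ (m + 1 - 1) := by norm_num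

theorem bad_row_prob_le {M q r : ℕ} (I₁ I₂ : Finset (Fin M))
    (hq : I₁.card = q) (hr : I₂.card = r) (hr1 : 1 ≤ r) (hrq : r < q)
    (hk : 1 ≤ q - (I₁ ∩ I₂).card) :
    (((Finset.univ.filter (fun x : Fin M → Bool => BadRow I₁ I₂ x)).card : ℝ) / 2 ^ M
        ≤ (((Finset.range (q - (I₁ ∩ I₂).card + 1)).sup
              (fun l => Nat.choose (q - (I₁ ∩ I₂).card) l) : ℕ) : ℝ) /
            2 ^ (q - (I₁ ∩ I₂).card)) ∧
    ((((Finset.range (q - (I₁ ∩ I₂).card + 1)).sup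
          (fun l => Nat.choose (q - (I₁ ∩ I₂).card) l) : ℕ) : ℝ) /
        2 ^ (q - (I₁ ∩ I₂).card) ≤ 1 / 2) := by
  set n := q - (I₁ ∩ I₂).card with hn
  set C := (Finset.range (n + 1)).sup (fun l => Nat.choose n l) with hC
  set A : Finset (Fin M) := I₁ \ I₂ with hAdef
  have hA : A.card = n := by
    have h2 := Finset.card_sdiff_add_card_inter I₁ I₂
    rw [hq] at h2
    rw [hAdef]
    omega
  have hAM : n ≤ M := by
    have := Finset.card_le_univ A
    simp only [Finset.card_univ, Fintype.card_fin] at this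
    omega
  set S := Finset.univ.filter (fun x : Fin M → Bool => BadRow I₁ I₂ x) with hS
  set Φ : (Fin M → Bool) → (Fin M → Bool) :=
    fun x i => if i ∈ A then false else x i with hΦ
  -- fibers of Φ on S have card ≤ C
  have hfiber : ∀ g ∈ S.image Φ, (S.filter fun x => Φ x = g).card ≤ C := by
    intro g _
    rcases (S.filter fun x => Φ x = g).eq_empty_or_nonempty with he | ⟨x₀, hx₀⟩
    · simp [he]
    have key : ∀ x, x ∈ (S.filter fun x => Φ x = g) →
        BadRow I₁ I₂ x ∧ (∀ i, i ∉ A → x i = g i) := by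
      intro x hx
      rw [Finset.mem_filter] at hx
      obtain ⟨hx1, hx2⟩ := hx
      rw [hS, Finset.mem_filter] at hx1
      refine ⟨hx1.2, fun i hi => ?_⟩
      have := congrFun hx2 i
      simp only [hΦ] at this
      rwa [if_neg hi] at this
    -- counts determined by g plus sum over A
    have count1 : ∀ x : Fin M → Bool, (∀ i, i ∉ A → x i = g i) →
        (I₂.filter (fun i => x i = true)).card
          = (I₂.filter (fun i => g i = true)).card := by
      intro x hx
      congr 1
      apply Finset.filter_congr
      intro i hi
      have : i ∉ A := by simp [hAdef, hi]
      rw [hx i this]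
    have count2 : ∀ x : Fin M → Bool, (∀ i, i ∉ A → x i = g i) →
        (I₁.filter (fun i => x i = true)).card
          = ((I₁ ∩ I₂).filter (fun i => g i = true)).card
            + (A.filter (fun i => x i = true)).card := by
      intro x hx
      have hsplit : I₁ = (I₁ ∩ I₂) ∪ A := by
        rw [hAdef]; ext i; simp; tauto
      have hdisj : Disjoint ((I₁ ∩ I₂).filter (fun i => x i = true))
          (A.filter (fun i => x i = true)) := by
        apply Finset.disjoint_filter_filter
        rw [hAdef, Finset.disjoint_left]
        intro i hi
        simp at hi ⊢
        tauto
      have hfu : I₁.filter (fun i => x i = true)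
          = ((I₁ ∩ I₂).filter (fun i => x i = true)) ∪ (A.filter (fun i => x i = true)) := by
        rw [← Finset.filter_union, ← hsplit]
      rw [hfu, Finset.card_union_of_disjoint hdisj]
      congr 1
      congr 1
      apply Finset.filter_congr
      intro i hi
      have : i ∉ A := by
        rw [hAdef]; simp at hi ⊢; tauto
      rw [hx i this]
    -- all x in the fiber have the same number of ones on A
    have hsame : ∀ x : Fin M → Bool, x ∈ (S.filter fun x => Φ x = g) →
        (A.filter (fun i => x i = true)).card
          = (A.filter (fun i => x₀ i = true)).card := by
      intro x hx
      obtain ⟨hb, hg⟩ := key x hx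
      obtain ⟨hb₀, hg₀⟩ := key x₀ hx₀
      unfold BadRow at hb hb₀
      rw [count1 x hg] at hb
      rw [count1 x₀ hg₀] at hb₀
      rw [count2 x hg] at hb
      rw [count2 x₀ hg₀] at hb₀
      have heq : ((((I₁ ∩ I₂).filter (fun i => g i = true)).card
            + (A.filter (fun i => x i = true)).card : ℕ) : ℝ) / I₁.card
          = ((((I₁ ∩ I₂).filter (fun i => g i = true)).card
            + (A.filter (fun i => x₀ i = true)).card : ℕ) : ℝ) / I₁.card := by
        rw [hb, hb₀]
      have hq0 : (I₁.card : ℝ) ≠ 0 := by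
        rw [hq]
        exact Nat.cast_ne_zero.2 (by omega)
      field_simp at heq
      exact Nat.add_left_cancel (by exact_mod_cast heq)
    set ℓ := (A.filter (fun i => x₀ i = true)).card with hℓ
    have hℓn : ℓ ≤ n := by
      rw [hℓ, ← hA]
      exact Finset.card_le_card (Finset.filter_subset _ _)
    have hinj : Set.InjOn (fun x : Fin M → Bool => A.filter (fun i => x i = true))
        ((S.filter fun x => Φ x = g) : Finset (Fin M → Bool)) := by
      intro x hx y hy hxy
      simp only [Finset.coe_filter, Set.mem_setOf_eq] at hx hy
      obtain ⟨_, hgx⟩ := key x (Finset.mem_filter.2 ⟨hx.1, hx.2⟩)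
      obtain ⟨_, hgy⟩ := key y (Finset.mem_filter.2 ⟨hy.1, hy.2⟩)
      funext i
      by_cases hi : i ∈ A
      · simp only at hxy
        have h1 : (x i = true) ↔ (y i = true) := by
          constructor
          · intro h
            have : i ∈ A.filter (fun j => x j = true) := Finset.mem_filter.2 ⟨hi, h⟩
            rw [hxy] at this
            exact (Finset.mem_filter.1 this).2
          · intro h
            have : i ∈ A.filter (fun j => y j = true) := Finset.mem_filter.2 ⟨hi, h⟩
            rw [← hxy] at this
            exact (Finset.mem_filter.1 this).2
        rcases Bool.eq_false_or_eq_true (x i) with h | h <;>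
          rcases Bool.eq_false_or_eq_true (y i) with h' | h' <;> rw [h, h'] <;> rw [h, h'] at h1 <;> simp at h1
      · rw [hgx i hi, hgy i hi]
    have hmaps : ∀ x ∈ (S.filter fun x => Φ x = g),
        A.filter (fun i => x i = true) ∈ A.powersetCard ℓ := by
      intro x hx
      rw [Finset.mem_powersetCard]
      exact ⟨Finset.filter_subset _ _, hsame x hx⟩
    calc (S.filter fun x => Φ x = g).card
        ≤ (A.powersetCard ℓ).card := Finset.card_le_card_of_injOn _ hmaps hinj
      _ = Nat.choose n ℓ := by rw [Finset.card_powersetCard, hA]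
      _ ≤ C := Finset.le_sup (Finset.mem_range.2 (by omega))
  -- the image has at most 2^(M-n) elements
  have himage : (S.image Φ).card ≤ 2 ^ (M - n) := by
    have : (S.image Φ).card ≤ (Finset.univ : Finset ({i // i ∈ Aᶜ} → Bool)).card := by
      apply Finset.card_le_card_of_injOn (fun g => fun i => g i.1)
        (fun _ _ => Finset.mem_univ _)
      intro g₁ hg₁ g₂ hg₂ hgg
      simp only [Finset.coe_image, Set.mem_image] at hg₁ hg₂
      obtain ⟨x₁, _, rfl⟩ := hg₁
      obtain ⟨x₂, _, rfl⟩ := hg₂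
      funext i
      by_cases hi : i ∈ A
      · simp [hΦ, hi]
      · have : i ∈ Aᶜ := Finset.mem_compl.2 hi
        exact congrFun hgg ⟨i, this⟩
    rw [Finset.card_univ] at this
    simp only [Fintype.card_fun, Fintype.card_coe, Fintype.card_bool] at this
    rwa [Finset.card_compl, Fintype.card_fin, hA] at this
  have hcount : S.card ≤ C * 2 ^ (M - n) :=
    le_trans (Finset.card_le_mul_card_image S C hfiber)
      (Nat.mul_le_mul_left C himage)
  have hCle : C ≤ 2 ^ (n - 1) := by
    apply Finset.sup_le
    intro l _
    exact choose_le_two_pow_pred n hk l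
  constructor
  · rw [div_le_div_iff₀ (by positivity) (by positivity)]
    have hpow : (2 : ℝ) ^ M = 2 ^ (M - n) * 2 ^ n := by
      rw [← pow_add]
      congr 1
      omega
    rw [hpow]
    have h1 : (S.card : ℝ) ≤ (C : ℝ) * 2 ^ (M - n) := by exact_mod_cast hcount
    have h2 : (0 : ℝ) < 2 ^ n := by positivity
    calc (S.card : ℝ) * 2 ^ n ≤ ((C : ℝ) * 2 ^ (M - n)) * 2 ^ n := by
          apply mul_le_mul_of_nonneg_right h1 (le_of_lt h2)
      _ = (C : ℝ) * (2 ^ (M - n) * 2 ^ n) := by ring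
  · rw [div_le_div_iff₀ (by positivity) (by norm_num : (0:ℝ) < 2)]
    have h1 : (C : ℝ) ≤ 2 ^ (n - 1) := by exact_mod_cast hCle
    have hpow : (2 : ℝ) ^ (n - 1) * 2 = 2 ^ n := by
      rw [← pow_succ]
      congr 1
      omega
    calc (C : ℝ) * 2 ≤ 2 ^ (n - 1) * 2 := by
          apply mul_le_mul_of_nonneg_right h1 (by norm_num)
      _ = 2 ^ n := hpow
      _ = 1 * 2 ^ n := by ring
end
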